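/- The John ellipsoid of B_X^n(√ℏ) × B_P^n(√ℏ) is B^{2n}(√ℏ): if E = z₀ + T(B^{2n}(1)) is any ellipsoid in ℝ^{2n} (z₀ ∈ ℝ^{2n}, T an invertible linear map) with E ⊆ B_X^n(√ℏ) × B_P^n(√ℏ), then the Lebesgue volume of E is at most the volume of B^{2n}(√ℏ), with equality if and only if E = B^{2n}(√ℏ). -/

import Mathlib

open Matrix MeasureTheory Pointwise

/-- The closed Euclidean ball of radius `R` centered at `0` in `ℝ^{2n}`. -/
def euclBall (n : ℕ) (R : ℝ) : Set (Fin n ⊕ Fin n → ℝ) :=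
  {z | ∑ i, (z i) ^ 2 ≤ R ^ 2}

/-- The product `B_X^n(√ℏ) × B_P^n(√ℏ)` of the configuration- and momentum-space balls. -/
def ballProd (n : ℕ) (ℏ : ℝ) : Set (Fin n ⊕ Fin n → ℝ) :=
  {z | (∑ j, (z (Sum.inl j)) ^ 2 ≤ ℏ) ∧ (∑ j, (z (Sum.inr j)) ^ 2 ≤ ℏ)}

/-- AM-GM via the exponential inequality, with equality case. -/
lemma amgm_exp {ι : Type*} [Fintype ι] (lam : ι → ℝ) (hnn : ∀ i, 0 ≤ lam i) (c : ℝ)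
    (hc : 0 < c) (hsum : ∑ i, lam i ≤ (Fintype.card ι : ℝ) * c) :
    ∏ i, lam i ≤ c ^ Fintype.card ι ∧
      (∏ i, lam i = c ^ Fintype.card ι → ∀ i, lam i = c) := by
  classical
  set N := Fintype.card ι with hN
  have key : ∀ i : ι, lam i ≤ c * Real.exp (lam i / c - 1) := by
    intro i
    have h1 : (lam i / c - 1) + 1 ≤ Real.exp (lam i / c - 1) := Real.add_one_le_exp _
    have h2 : lam i / c ≤ Real.exp (lam i / c - 1) := by linarith
    calc lam i = c * (lam i / c) := by field_simp
      _ ≤ c * Real.exp (lam i / c - 1) := mul_le_mul_of_nonneg_left h2 hc.le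
  have hsum' : ∑ i : ι, (lam i / c - 1) = (∑ i, lam i) / c - N := by
    rw [Finset.sum_sub_distrib, ← Finset.sum_div]
    simp [hN]
  have hS_nonpos : ∑ i : ι, (lam i / c - 1) ≤ 0 := by
    rw [hsum']
    have : (∑ i, lam i) / c ≤ N := by
      rw [div_le_iff₀ hc]; linarith
    linarith
  have hprod_eq : ∏ i : ι, (c * Real.exp (lam i / c - 1))
      = c ^ N * Real.exp (∑ i : ι, (lam i / c - 1)) := by
    rw [Finset.prod_mul_distrib, Finset.prod_const, Real.exp_sum]
    simp [hN]
  have hexp_le : Real.exp (∑ i : ι, (lam i / c - 1)) ≤ 1 := Real.exp_le_one_iff.mpr hS_nonpos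
  have hub : ∏ i : ι, (c * Real.exp (lam i / c - 1)) ≤ c ^ N := by
    rw [hprod_eq]
    calc c ^ N * Real.exp (∑ i : ι, (lam i / c - 1)) ≤ c ^ N * 1 :=
          mul_le_mul_of_nonneg_left hexp_le (by positivity)
      _ = c ^ N := mul_one _
  have hle : ∏ i, lam i ≤ c ^ N :=
    le_trans (Finset.prod_le_prod (fun i _ => hnn i) (fun i _ => key i)) hub
  refine ⟨hle, fun heq i => ?_⟩
  by_contra hne
  have hpos : ∀ j : ι, 0 < lam j := by
    intro j
    rcases (hnn j).lt_or_eq with h | h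
    · exact h
    · exfalso
      have : ∏ k, lam k = 0 := Finset.prod_eq_zero (Finset.mem_univ j) h.symm
      rw [heq] at this
      exact (pow_pos hc N).ne' this
  have hstrict : lam i < c * Real.exp (lam i / c - 1) := by
    have hne' : lam i / c - 1 ≠ 0 := by
      intro h
      apply hne
      field_simp at h
      linarith
    have h1 : (lam i / c - 1) + 1 < Real.exp (lam i / c - 1) := Real.add_one_lt_exp hne'
    have h2 : lam i / c < Real.exp (lam i / c - 1) := by linarith
    calc lam i = c * (lam i / c) := by field_simp
      _ < c * Real.exp (lam i / c - 1) := (mul_lt_mul_iff_right₀ hc).mpr h2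
  have h4 : ∏ j, lam j < ∏ j : ι, (c * Real.exp (lam j / c - 1)) :=
    Finset.prod_lt_prod (fun j _ => hpos j) (fun j _ => key j) ⟨i, Finset.mem_univ i, hstrict⟩
  have h5 : ∏ j, lam j < c ^ N := lt_of_lt_of_le h4 hub
  rw [heq] at h5
  exact lt_irrefl _ h5

/-- The trace of a real symmetric matrix is the sum of its eigenvalues. -/
lemma trace_eq_sum_eig {m : Type*} [Fintype m] [DecidableEq m] {S : Matrix m m ℝ}
    (hS : S.IsHermitian) : S.trace = ∑ i, hS.eigenvalues i := by
  have h := hS.spectral_theorem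
  have hu : (star (hS.eigenvectorUnitary : Matrix m m ℝ)) * (hS.eigenvectorUnitary : Matrix m m ℝ)
      = 1 := mem_unitaryGroup_iff'.mp (hS.eigenvectorUnitary).2
  calc S.trace = ((hS.eigenvectorUnitary : Matrix m m ℝ) * diagonal (RCLike.ofReal ∘ hS.eigenvalues)
        * star (hS.eigenvectorUnitary : Matrix m m ℝ)).trace := by rw [Unitary.conjStarAlgAut_apply] at h; rw [← h]
    _ = (star (hS.eigenvectorUnitary : Matrix m m ℝ) * ((hS.eigenvectorUnitary : Matrix m m ℝ)
        * diagonal (RCLike.ofReal ∘ hS.eigenvalues))).trace := trace_mul_comm _ _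
    _ = (diagonal (RCLike.ofReal ∘ hS.eigenvalues)).trace := by
        rw [← mul_assoc, hu, one_mul]
    _ = ∑ i, hS.eigenvalues i := by simp [trace_diagonal]

/-- A real symmetric matrix all of whose eigenvalues equal `c` is `c • 1`. -/
lemma eq_smul_one_of_eig_const {m : Type*} [Fintype m] [DecidableEq m] {S : Matrix m m ℝ}
    (hS : S.IsHermitian) (c : ℝ) (hc : ∀ i, hS.eigenvalues i = c) :
    S = c • (1 : Matrix m m ℝ) := by
  have h := hS.spectral_theorem
  have hu : (hS.eigenvectorUnitary : Matrix m m ℝ) * star (hS.eigenvectorUnitary : Matrix m m ℝ)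
      = 1 := mem_unitaryGroup_iff.mp (hS.eigenvectorUnitary).2
  have hd : diagonal (RCLike.ofReal ∘ hS.eigenvalues) = c • (1 : Matrix m m ℝ) := by
    rw [show (RCLike.ofReal ∘ hS.eigenvalues : m → ℝ) = fun _ => c by funext i; simp [hc i]]
    simp [Matrix.smul_one_eq_diagonal]
  rw [h, hd]
  rw [Unitary.conjStarAlgAut_apply, Matrix.mul_smul, Matrix.smul_mul, mul_one, hu]

/-- Each row of `T`, together with the corresponding part of the center, is controlled by the
containment of the ellipsoid in a slab. -/
lemma row_bound {n : ℕ} {ℏ : ℝ} (z₀ : Fin n ⊕ Fin n → ℝ)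
    (T : Matrix (Fin n ⊕ Fin n) (Fin n ⊕ Fin n) ℝ) (e : Fin n → Fin n ⊕ Fin n)
    (hq : ∀ u : Fin n ⊕ Fin n → ℝ, (∑ k, (u k) ^ 2) ≤ 1 →
      ∑ j, (z₀ (e j) + T.mulVec u (e j)) ^ 2 ≤ ℏ)
    (i : Fin n) :
    (∑ k, (T (e i) k) ^ 2) + ∑ j, (z₀ (e j)) ^ 2 ≤ ℏ := by
  classical
  have claim : ∀ u : Fin n ⊕ Fin n → ℝ, (∑ k, (u k) ^ 2) ≤ 1 →
      (∑ j, (z₀ (e j)) ^ 2) + ∑ j, (T.mulVec u (e j)) ^ 2 ≤ ℏ := by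
    intro u hu
    have h1 := hq u hu
    have hu' : (∑ k, ((-u) k) ^ 2) ≤ 1 := by simpa using hu
    have h2 := hq (-u) hu'
    have hneg : ∀ j, T.mulVec (-u) (e j) = -(T.mulVec u (e j)) := by
      intro j; rw [Matrix.mulVec_neg]; simp
    have h2' : ∑ j, (z₀ (e j) - T.mulVec u (e j)) ^ 2 ≤ ℏ := by
      calc ∑ j, (z₀ (e j) - T.mulVec u (e j)) ^ 2
          = ∑ j, (z₀ (e j) + T.mulVec (-u) (e j)) ^ 2 := by
            refine Finset.sum_congr rfl fun j _ => ?_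
            rw [hneg j]; ring
        _ ≤ ℏ := h2
    have hid : (∑ j, (z₀ (e j) + T.mulVec u (e j)) ^ 2)
        + ∑ j, (z₀ (e j) - T.mulVec u (e j)) ^ 2
        = 2 * (∑ j, (z₀ (e j)) ^ 2) + 2 * ∑ j, (T.mulVec u (e j)) ^ 2 := by
      rw [Finset.mul_sum, Finset.mul_sum, ← Finset.sum_add_distrib,
        ← Finset.sum_add_distrib]
      exact Finset.sum_congr rfl fun j _ => by ring
    linarith
  set c2 : ℝ := ∑ k, (T (e i) k) ^ 2 with hc2
  have hc2nn : 0 ≤ c2 := Finset.sum_nonneg fun k _ => sq_nonneg _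
  rcases hc2nn.lt_or_eq with hpos | hzero
  · set c : ℝ := Real.sqrt c2 with hc
    have hcpos : 0 < c := Real.sqrt_pos.mpr hpos
    have hcsq : c ^ 2 = c2 := Real.sq_sqrt hc2nn
    set u : Fin n ⊕ Fin n → ℝ := c⁻¹ • (fun k => T (e i) k) with hu_def
    have hu : (∑ k, (u k) ^ 2) ≤ 1 := by
      have : ∑ k, (u k) ^ 2 = c⁻¹ ^ 2 * c2 := by
        rw [hc2, Finset.mul_sum]
        exact Finset.sum_congr rfl fun k _ => by
          simp [hu_def]; ring
      rw [this, ← hcsq]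
      field_simp
      exact le_rfl
    have hTu : T.mulVec u (e i) = c := by
      have h1 : T.mulVec u (e i) = c⁻¹ * ∑ k, T (e i) k * T (e i) k := by
        rw [hu_def, Matrix.mulVec_smul]
        simp [Matrix.mulVec, dotProduct, smul_eq_mul]
      have h2 : ∑ k, T (e i) k * T (e i) k = c2 := by
        rw [hc2]; exact Finset.sum_congr rfl fun k _ => (sq (T (e i) k)).symm
      rw [h1, h2, ← hcsq]
      field_simp
    have hle : c2 ≤ ∑ j, (T.mulVec u (e j)) ^ 2 := by
      have h := Finset.single_le_sum (f := fun j => (T.mulVec u (e j)) ^ 2)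
        (fun j _ => sq_nonneg _) (Finset.mem_univ i)
      rw [hTu, hcsq] at h
      exact h
    have := claim u hu
    linarith
  · have h0 := claim 0 (by simp)
    have hz : ∑ j, (T.mulVec (0 : Fin n ⊕ Fin n → ℝ) (e j)) ^ 2 = 0 := by
      simp [Matrix.mulVec_zero]
    rw [hz] at h0
    linarith

/-- Volume of an affine image. -/
lemma vol_image (n : ℕ) (z₀ : Fin n ⊕ Fin n → ℝ)
    (T : Matrix (Fin n ⊕ Fin n) (Fin n ⊕ Fin n) ℝ) (s : Set (Fin n ⊕ Fin n → ℝ)) :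
    volume ((fun z => z₀ + T.mulVec z) '' s)
      = ENNReal.ofReal |T.det| * volume s := by
  have h1 : (fun z => z₀ + T.mulVec z) '' s
      = (fun y => -z₀ + y) ⁻¹' ((Matrix.toLin' T) '' s) := by
    ext w
    simp only [Set.mem_image, Set.mem_preimage, Matrix.toLin'_apply]
    constructor
    · rintro ⟨u, hu, rfl⟩; exact ⟨u, hu, by abel⟩
    · rintro ⟨u, hu, h⟩; exact ⟨u, hu, by rw [h]; abel⟩
  rw [h1, measure_preimage_add volume (-z₀) _,
    Measure.addHaar_image_linearMap volume (Matrix.toLin' T) s, LinearMap.det_toLin']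

/-- Scaling behaviour of the volume of the Euclidean ball. -/
lemma vol_ball_scale (n : ℕ) (ℏ : ℝ) (hℏ : 0 < ℏ) :
    volume (euclBall n (Real.sqrt ℏ))
      = ENNReal.ofReal (ℏ ^ n) * volume (euclBall n 1) := by
  have hs : euclBall n (Real.sqrt ℏ) = Real.sqrt ℏ • euclBall n 1 := by
    have hsne : Real.sqrt ℏ ≠ 0 := (Real.sqrt_pos.mpr hℏ).ne'
    ext z
    rw [Set.mem_smul_set_iff_inv_smul_mem₀ hsne]
    simp only [euclBall, Set.mem_setOf_eq, Pi.smul_apply, smul_eq_mul, one_pow]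
    have hrw : ∑ i, ((Real.sqrt ℏ)⁻¹ * z i) ^ 2 = ((Real.sqrt ℏ) ^ 2)⁻¹ * ∑ i, (z i) ^ 2 := by
      rw [Finset.mul_sum]; exact Finset.sum_congr rfl fun i _ => by ring
    rw [hrw, Real.sq_sqrt hℏ.le, inv_mul_le_iff₀ hℏ, mul_one]
  rw [hs, Measure.addHaar_smul]
  congr 1
  have hcard : Module.finrank ℝ (Fin n ⊕ Fin n → ℝ) = n + n := by
    rw [Module.finrank_pi]; simp
  rw [hcard]
  rw [abs_of_nonneg (by positivity)]
  rw [show n + n = 2 * n by ring, pow_mul, Real.sq_sqrt hℏ.le]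

lemma vol_ball_pos (n : ℕ) : volume (euclBall n 1) ≠ 0 := by
  set N : ℕ := Fintype.card (Fin n ⊕ Fin n)
  have hsub : Metric.ball (0 : Fin n ⊕ Fin n → ℝ) ((N : ℝ) + 1)⁻¹ ⊆ euclBall n 1 := by
    intro z hz
    simp only [Metric.mem_ball, dist_zero_right] at hz
    have hbound : ∀ i, (z i) ^ 2 ≤ (((N : ℝ) + 1)⁻¹) ^ 2 := by
      intro i
      have h1 : |z i| ≤ ‖z‖ := norm_le_pi_norm z i
      have h2 : |z i| ≤ ((N : ℝ) + 1)⁻¹ := le_trans h1 hz.le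
      calc (z i) ^ 2 = |z i| ^ 2 := (sq_abs _).symm
        _ ≤ (((N : ℝ) + 1)⁻¹) ^ 2 := by
            apply pow_le_pow_left₀ (abs_nonneg _) h2
    simp only [euclBall, Set.mem_setOf_eq, one_pow]
    calc ∑ i, (z i) ^ 2 ≤ ∑ _i : Fin n ⊕ Fin n, (((N : ℝ) + 1)⁻¹) ^ 2 :=
          Finset.sum_le_sum fun i _ => hbound i
      _ = (N : ℝ) * (((N : ℝ) + 1)⁻¹) ^ 2 := by rw [Finset.sum_const]; simp [N, mul_comm]
      _ ≤ 1 := by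
          have hN : (0 : ℝ) ≤ N := Nat.cast_nonneg _
          have h : ((N : ℝ) + 1) ^ 2 > 0 := by positivity
          rw [inv_pow, mul_inv_le_iff₀ h, one_mul]
          nlinarith
  have := Metric.measure_ball_pos (volume) (0 : Fin n ⊕ Fin n → ℝ)
    (r := ((N : ℝ) + 1)⁻¹) (by positivity)
  exact fun h => this.ne' (le_antisymm (h ▸ measure_mono hsub) zero_le)

lemma vol_ball_top (n : ℕ) : volume (euclBall n 1) ≠ ⊤ := by
  have hsub : euclBall n 1 ⊆ Metric.closedBall (0 : Fin n ⊕ Fin n → ℝ) 1 := by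
    intro z hz
    simp only [euclBall, Set.mem_setOf_eq, one_pow] at hz
    simp only [Metric.mem_closedBall, dist_zero_right]
    rw [pi_norm_le_iff_of_nonneg zero_le_one]
    intro i
    have h1 : (z i) ^ 2 ≤ 1 := le_trans (Finset.single_le_sum
      (f := fun i => (z i) ^ 2) (fun i _ => sq_nonneg _) (Finset.mem_univ i)) hz
    have : |z i| ≤ 1 := by nlinarith [abs_nonneg (z i), sq_abs (z i)]
    simpa using this
  exact ne_top_of_le_ne_top measure_closedBall_lt_top.ne (measure_mono hsub)

/-- The John ellipsoid of `B_X^n(√ℏ) × B_P^n(√ℏ)` is `B^{2n}(√ℏ)`: any ellipsoid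
`E = z₀ + T(B^{2n}(1))` contained in `B_X^n(√ℏ) × B_P^n(√ℏ)` has volume at most that of
`B^{2n}(√ℏ)`, with equality iff `E = B^{2n}(√ℏ)`. -/
theorem john_ellipsoid_of_double_ball
    (n : ℕ) (hn : 1 ≤ n) (ℏ : ℝ) (hℏ : 0 < ℏ)
    (z₀ : Fin n ⊕ Fin n → ℝ) (T : Matrix (Fin n ⊕ Fin n) (Fin n ⊕ Fin n) ℝ)
    (hT : IsUnit T.det)
    (hE : (fun z => z₀ + T.mulVec z) '' euclBall n 1 ⊆ ballProd n ℏ) :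
    volume ((fun z => z₀ + T.mulVec z) '' euclBall n 1) ≤
        volume (euclBall n (Real.sqrt ℏ)) ∧
      (volume ((fun z => z₀ + T.mulVec z) '' euclBall n 1) =
          volume (euclBall n (Real.sqrt ℏ)) ↔
        (fun z => z₀ + T.mulVec z) '' euclBall n 1 = euclBall n (Real.sqrt ℏ)) := by
  classical
  -- basic containment consequences
  have hmem : ∀ u : Fin n ⊕ Fin n → ℝ, (∑ k, (u k) ^ 2) ≤ 1 →
      (z₀ + T.mulVec u) ∈ ballProd n ℏ := by
    intro u hu
    exact hE ⟨u, by simpa [euclBall] using hu, rfl⟩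
  have hq1 : ∀ u : Fin n ⊕ Fin n → ℝ, (∑ k, (u k) ^ 2) ≤ 1 →
      ∑ j, (z₀ (Sum.inl j) + T.mulVec u (Sum.inl j)) ^ 2 ≤ ℏ := by
    intro u hu
    have := (hmem u hu).1
    simpa using this
  have hq2 : ∀ u : Fin n ⊕ Fin n → ℝ, (∑ k, (u k) ^ 2) ≤ 1 →
      ∑ j, (z₀ (Sum.inr j) + T.mulVec u (Sum.inr j)) ^ 2 ≤ ℏ := by
    intro u hu
    have := (hmem u hu).2
    simpa using this
  have hrow1 := row_bound z₀ T Sum.inl hq1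
  have hrow2 := row_bound z₀ T Sum.inr hq2
  set X : ℝ := ∑ j, (z₀ (Sum.inl j)) ^ 2 with hXdef
  set P : ℝ := ∑ j, (z₀ (Sum.inr j)) ^ 2 with hPdef
  have hX : 0 ≤ X := Finset.sum_nonneg fun _ _ => sq_nonneg _
  have hP : 0 ≤ P := Finset.sum_nonneg fun _ _ => sq_nonneg _
  -- spectral setup
  set S : Matrix (Fin n ⊕ Fin n) (Fin n ⊕ Fin n) ℝ := Tᴴ * T with hSdef
  have hpsd : S.PosSemidef := posSemidef_conjTranspose_mul_self T
  have hS : S.IsHermitian := hpsd.1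
  set lam : Fin n ⊕ Fin n → ℝ := hS.eigenvalues with hlamdef
  have hlam_nn : ∀ i, 0 ≤ lam i := hpsd.eigenvalues_nonneg
  -- trace computation
  have htr : S.trace = ∑ k, ∑ j, (T k j) ^ 2 := by
    simp only [hSdef, Matrix.trace, Matrix.diag, Matrix.mul_apply,
      Matrix.conjTranspose_apply, star_trivial, ← pow_two]
    rw [Finset.sum_comm]
  have htrb : S.trace ≤ (n + n : ℝ) * ℏ - n * X - n * P := by
    rw [htr, Fintype.sum_sum_type]
    have h1 : ∑ i : Fin n, ∑ j, (T (Sum.inl i) j) ^ 2 ≤ ∑ _i : Fin n, (ℏ - X) :=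
      Finset.sum_le_sum fun i _ => by linarith [hrow1 i]
    have h2 : ∑ i : Fin n, ∑ j, (T (Sum.inr i) j) ^ 2 ≤ ∑ _i : Fin n, (ℏ - P) :=
      Finset.sum_le_sum fun i _ => by linarith [hrow2 i]
    rw [Finset.sum_const, Finset.card_univ, Fintype.card_fin] at h1 h2
    have := add_le_add h1 h2
    simp only [nsmul_eq_mul] at this
    push_cast
    linarith
  have hsum_lam : ∑ i, lam i = S.trace := (trace_eq_sum_eig hS).symm
  have hcard : Fintype.card (Fin n ⊕ Fin n) = n + n := by simp
  -- AM-GM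
  have hamgm := amgm_exp lam hlam_nn ℏ hℏ (by
    rw [hsum_lam, hcard]
    push_cast
    nlinarith [(by exact_mod_cast hn : (1:ℝ) ≤ (n:ℝ))])
  -- determinant identities
  have hdet_prod : T.det ^ 2 = ∏ i, lam i := by
    have h1 : S.det = ∏ i, lam i := by
      have := hS.det_eq_prod_eigenvalues
      simpa using this
    calc T.det ^ 2 = Tᴴ.det * T.det := by
          rw [det_conjTranspose]; simp [pow_two]
      _ = S.det := (det_mul _ _).symm
      _ = ∏ i, lam i := h1
  have hdet_le : |T.det| ≤ ℏ ^ n := by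
    have h1 : |T.det| ^ 2 = ∏ i, lam i := by rw [sq_abs, hdet_prod]
    have h2 : ∏ i, lam i ≤ ℏ ^ (n + n) := by
      have := hamgm.1
      rwa [hcard] at this
    have h3 : ℏ ^ (n + n) = (ℏ ^ n) ^ 2 := by rw [← pow_mul]; ring_nf
    nlinarith [abs_nonneg T.det, pow_pos hℏ n]
  -- volumes
  have hv1 := vol_image n z₀ T (euclBall n 1)
  have hv2 := vol_ball_scale n ℏ hℏ
  have hV0 := vol_ball_pos n
  have hVtop := vol_ball_top n
  constructor
  · rw [hv1, hv2]
    exact mul_le_mul_left (ENNReal.ofReal_le_ofReal hdet_le) _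
  constructor
  swap
  · intro h; rw [h]
  -- the equality case
  intro hveq
  rw [hv1, hv2] at hveq
  have habs : |T.det| = ℏ ^ n := by
    have := (ENNReal.mul_left_inj hV0 hVtop).mp hveq
    exact (ENNReal.ofReal_eq_ofReal_iff (abs_nonneg _) (by positivity)).mp this
  have hprod_eq : ∏ i, lam i = ℏ ^ Fintype.card (Fin n ⊕ Fin n) := by
    rw [hcard, ← hdet_prod, ← sq_abs, habs, ← pow_mul]
    ring_nf
  have hlam_eq : ∀ i, lam i = ℏ := hamgm.2 hprod_eq
  -- the center must vanish
  have hsum_eq : ∑ i, lam i = ((n : ℝ) + n) * ℏ := by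
    rw [Finset.sum_congr rfl fun i _ => hlam_eq i, Finset.sum_const, Finset.card_univ, hcard]
    push_cast
    ring
  have hXP : X = 0 ∧ P = 0 := by
    have hTr : S.trace = ((n : ℝ) + n) * ℏ := by rw [← hsum_lam]; exact hsum_eq
    have hn' : (1 : ℝ) ≤ n := by exact_mod_cast hn
    constructor <;> nlinarith [htrb, hTr]
  have hz₀ : z₀ = 0 := by
    funext k
    have hXz : ∀ j, z₀ (Sum.inl j) = 0 := by
      intro j
      have := (Finset.sum_eq_zero_iff_of_nonneg
        (fun i (_ : i ∈ Finset.univ) => sq_nonneg (z₀ (Sum.inl i)))).mp hXP.1 j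
        (Finset.mem_univ j)
      exact pow_eq_zero_iff (n := 2) (by norm_num) |>.mp this
    have hPz : ∀ j, z₀ (Sum.inr j) = 0 := by
      intro j
      have := (Finset.sum_eq_zero_iff_of_nonneg
        (fun i (_ : i ∈ Finset.univ) => sq_nonneg (z₀ (Sum.inr i)))).mp hXP.2 j
        (Finset.mem_univ j)
      exact pow_eq_zero_iff (n := 2) (by norm_num) |>.mp this
    cases k with
    | inl j => exact hXz j
    | inr j => exact hPz j
  -- the matrix is a multiple of an orthogonal matrix
  have hSid : S = ℏ • (1 : Matrix (Fin n ⊕ Fin n) (Fin n ⊕ Fin n) ℝ) :=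
    eq_smul_one_of_eig_const hS ℏ hlam_eq
  have hquad : ∀ u : Fin n ⊕ Fin n → ℝ,
      ∑ i, (T.mulVec u i) ^ 2 = ℏ * ∑ i, (u i) ^ 2 := by
    intro u
    have h1 : ∑ i, (T.mulVec u i) ^ 2 = dotProduct (T.mulVec u) (T.mulVec u) := by
      simp [dotProduct, pow_two]
    have h2 : dotProduct u (S.mulVec u)
        = dotProduct (T.mulVec u) (T.mulVec u) := by
      rw [hSdef, ← Matrix.mulVec_mulVec, Matrix.dotProduct_mulVec]
      congr 1
      rw [Matrix.vecMul_conjTranspose]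
      simp
    have h3 : dotProduct u (S.mulVec u) = ℏ * ∑ i, (u i) ^ 2 := by
      rw [hSid, Matrix.smul_mulVec, Matrix.one_mulVec, dotProduct_smul,
        smul_eq_mul]
      congr 1
      simp [dotProduct, pow_two]
    rw [h1, ← h2, h3]
  -- conclude the set equality
  subst hz₀
  ext w
  simp only [Set.mem_image, euclBall, Set.mem_setOf_eq]
  constructor
  · rintro ⟨u, hu, rfl⟩
    simp only [one_pow] at hu
    have : ∑ i, (((0 : Fin n ⊕ Fin n → ℝ) + T.mulVec u) i) ^ 2 = ℏ * ∑ i, (u i) ^ 2 := by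
      simpa using hquad u
    rw [this, Real.sq_sqrt hℏ.le]
    calc ℏ * ∑ i, (u i) ^ 2 ≤ ℏ * 1 := mul_le_mul_of_nonneg_left hu hℏ.le
      _ = ℏ := mul_one _
  · intro hw
    rw [Real.sq_sqrt hℏ.le] at hw
    refine ⟨T⁻¹.mulVec w, ?_, ?_⟩
    · have hTw : T.mulVec (T⁻¹.mulVec w) = w := by
        rw [Matrix.mulVec_mulVec, Matrix.mul_nonsing_inv T hT, Matrix.one_mulVec]
      have h := hquad (T⁻¹.mulVec w)
      rw [hTw] at h
      have hle1 : ∑ i, ((T⁻¹.mulVec w) i) ^ 2 ≤ 1 := by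
        have hmul : ℏ * ∑ i, ((T⁻¹.mulVec w) i) ^ 2 ≤ ℏ * 1 := by
          rw [mul_one, ← h]; exact hw
        exact le_of_mul_le_mul_left hmul hℏ
      simp only [euclBall, Set.mem_setOf_eq, one_pow]
      exact hle1
    · rw [Matrix.mulVec_mulVec, Matrix.mul_nonsing_inv T hT, Matrix.one_mulVec]
      simp
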